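/- arXiv:math/0510300 — 2 statements merged into one kernel-verified Lean document; each statement's English description precedes it below -/
import Mathlib

section
/- For every real t > 0 and each ε ∈ {1,−1}, the spinors ψ₂⁺ = (0,1,0,1,0,0,0,0) (for ε = +1) and ψ₂⁻ = (1,0,−1,0,0,0,0,0) (for ε = −1) are ∇ᵀ-parallel for the torsion form T₂^ε = −(t/2)·[(ε/2)(η⁺ + 4e₁₂₅ − 2e₁₃₆) + (1/3)(η⁻ + 2e₂₄₅ − e₃₄₆) − (2ε/3)(2e₁₄₇ − e₂₃₇ + e₅₆₇)]; that is, σ(A_i)·ψ₂^ε + Cl(e_i ⌟ T₂^ε)·ψ₂^ε = 0 for every i = 1,…,7, where A₁,…,A₇ are the connection matrices of example (2). -/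
open Matrix

noncomputable section

/-- `E8 i j` is the 8×8 skew-symmetric matrix sending the `i`-th basis
vector to the `j`-th, the `j`-th to minus the `i`-th, and all others to 0. -/
def E8 (i j : Fin 8) : Matrix (Fin 8) (Fin 8) ℝ :=
  Matrix.single j i 1 - Matrix.single i j 1

/-- The matrices `e₁,…,e₇` of the 7-dimensional spin representation on ℝ⁸
(indices shifted to be 0-based). -/
def g : Fin 7 → Matrix (Fin 8) (Fin 8) ℝ :=
  ![E8 0 7 + E8 1 6 - E8 2 5 - E8 3 4,
    -E8 0 6 + E8 1 7 + E8 2 4 - E8 3 5,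
    -E8 0 5 + E8 1 4 - E8 2 7 + E8 3 6,
    -E8 0 4 - E8 1 5 - E8 2 6 - E8 3 7,
    -E8 0 2 - E8 1 3 + E8 4 6 + E8 5 7,
    E8 0 3 - E8 1 2 - E8 4 7 + E8 5 6,
    E8 0 1 - E8 2 3 - E8 4 5 + E8 6 7]

/-- 7×7 version of `E_{ij}`. -/
def E7 (i j : Fin 7) : Matrix (Fin 7) (Fin 7) ℝ :=
  Matrix.single j i 1 - Matrix.single i j 1

/-- The spin lift `σ(A) = (1/2) Σ_{p<q} a_{pq} e_p e_q` of a skew-symmetric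
7×7 matrix `A = Σ_{p<q} a_{pq} E_{pq}` (so that `a_{pq} = A q p` for `p < q`). -/
def spinLift (A : Matrix (Fin 7) (Fin 7) ℝ) : Matrix (Fin 8) (Fin 8) ℝ :=
  (1/2 : ℝ) • ∑ p : Fin 7, ∑ q : Fin 7, if p < q then A q p • (g p * g q) else 0

/-- Clifford action of the interior product `e_i ⌟ e_{abc}` (for `a<b<c`). -/
def contr (i a b c : Fin 7) : Matrix (Fin 8) (Fin 8) ℝ :=
  (if i = a then g b * g c else 0) - (if i = b then g a * g c else 0) +
    (if i = c then g a * g b else 0)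

/-- The ordered index triples (0-based) of the eleven basis 3-forms spanning `Λ³₁₁`:
`e₁₂₅, e₁₃₆, e₂₄₆, e₃₄₅, e₁₂₆, e₃₄₆, e₁₃₅, e₂₄₅, e₁₄₇, e₅₆₇, e₂₃₇`. -/
def tri : Fin 11 → Fin 7 × Fin 7 × Fin 7 :=
  ![(0,1,4),(0,2,5),(1,3,5),(2,3,4),(0,1,5),(2,3,5),(0,2,4),(1,3,4),(0,3,6),(4,5,6),(1,2,6)]

/-- For `T = Σ_k c_k e_{tri k} ∈ Λ³₁₁`, the Clifford action `Cl(e_i ⌟ T)`. -/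
def clContr (c : Fin 11 → ℝ) (i : Fin 7) : Matrix (Fin 8) (Fin 8) ℝ :=
  ∑ k : Fin 11, c k • contr i (tri k).1 (tri k).2.1 (tri k).2.2

/-- `ψ` is `∇ᵀ`-parallel for connection matrices `A` and torsion `T ∈ Λ³₁₁`
with coefficient vector `c`. -/
def IsParallel (A : Fin 7 → Matrix (Fin 7) (Fin 7) ℝ) (c : Fin 11 → ℝ)
    (ψ : Fin 8 → ℝ) : Prop :=
  ∀ i : Fin 7, (spinLift (A i)).mulVec ψ + (clContr c i).mulVec ψ = 0

/-- Connection matrices of example (2). -/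
def Aex2 (t : ℝ) : Fin 7 → Matrix (Fin 7) (Fin 7) ℝ :=
  ![(-t) • ((2:ℝ) • E7 0 6 + E7 2 4 - E7 1 5),
    (-t) • (E7 0 5 + (2:ℝ) • E7 1 6 + E7 3 4),
    (-t) • (E7 0 4 - E7 2 6),
    (-t) • (E7 1 4 - E7 3 6),
    (-t) • (E7 0 2 + E7 1 3 + (2:ℝ) • E7 4 6),
    (-t) • (E7 0 1 - E7 5 6),
    0]

/-- Coefficient vector of `η⁺ = e₁₂₅+e₁₃₆+e₂₄₆−e₃₄₅`. -/
def etaP : Fin 11 → ℝ := ![1,1,1,-1,0,0,0,0,0,0,0]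

/-- Coefficient vector of `η⁻ = e₁₂₆−e₁₃₅−e₂₄₅−e₃₄₆`. -/
def etaM : Fin 11 → ℝ := ![0,0,0,0,1,-1,-1,-1,0,0,0]

/-- Coefficient vector of the `k`-th basis 3-form of `Λ³₁₁`. -/
def bv (k : Fin 11) : Fin 11 → ℝ := Pi.single k 1

/-- Coefficient vector of the torsion form `T₂^ε`. -/
def T2 (t eps : ℝ) : Fin 11 → ℝ :=
  (-(t/2)) • ((eps/2) • (etaP + (4:ℝ) • bv 0 - (2:ℝ) • bv 1)
    + (1/3 : ℝ) • (etaM + (2:ℝ) • bv 7 - bv 5)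
    - (2*eps/3) • ((2:ℝ) • bv 8 - bv 10 + bv 9))

@[simp] lemma cv7_0 {α : Type*} (a0 a1 a2 a3 a4 a5 a6 : α) : ![a0, a1, a2, a3, a4, a5, a6] (0 : Fin 7) = a0 := rfl
@[simp] lemma cv7_1 {α : Type*} (a0 a1 a2 a3 a4 a5 a6 : α) : ![a0, a1, a2, a3, a4, a5, a6] (1 : Fin 7) = a1 := rfl
@[simp] lemma cv7_2 {α : Type*} (a0 a1 a2 a3 a4 a5 a6 : α) : ![a0, a1, a2, a3, a4, a5, a6] (2 : Fin 7) = a2 := rfl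
@[simp] lemma cv7_3 {α : Type*} (a0 a1 a2 a3 a4 a5 a6 : α) : ![a0, a1, a2, a3, a4, a5, a6] (3 : Fin 7) = a3 := rfl
@[simp] lemma cv7_4 {α : Type*} (a0 a1 a2 a3 a4 a5 a6 : α) : ![a0, a1, a2, a3, a4, a5, a6] (4 : Fin 7) = a4 := rfl
@[simp] lemma cv7_5 {α : Type*} (a0 a1 a2 a3 a4 a5 a6 : α) : ![a0, a1, a2, a3, a4, a5, a6] (5 : Fin 7) = a5 := rfl
@[simp] lemma cv7_6 {α : Type*} (a0 a1 a2 a3 a4 a5 a6 : α) : ![a0, a1, a2, a3, a4, a5, a6] (6 : Fin 7) = a6 := rfl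
@[simp] lemma cv8_0 {α : Type*} (a0 a1 a2 a3 a4 a5 a6 a7 : α) : ![a0, a1, a2, a3, a4, a5, a6, a7] (0 : Fin 8) = a0 := rfl
@[simp] lemma cv8_1 {α : Type*} (a0 a1 a2 a3 a4 a5 a6 a7 : α) : ![a0, a1, a2, a3, a4, a5, a6, a7] (1 : Fin 8) = a1 := rfl
@[simp] lemma cv8_2 {α : Type*} (a0 a1 a2 a3 a4 a5 a6 a7 : α) : ![a0, a1, a2, a3, a4, a5, a6, a7] (2 : Fin 8) = a2 := rfl
@[simp] lemma cv8_3 {α : Type*} (a0 a1 a2 a3 a4 a5 a6 a7 : α) : ![a0, a1, a2, a3, a4, a5, a6, a7] (3 : Fin 8) = a3 := rfl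
@[simp] lemma cv8_4 {α : Type*} (a0 a1 a2 a3 a4 a5 a6 a7 : α) : ![a0, a1, a2, a3, a4, a5, a6, a7] (4 : Fin 8) = a4 := rfl
@[simp] lemma cv8_5 {α : Type*} (a0 a1 a2 a3 a4 a5 a6 a7 : α) : ![a0, a1, a2, a3, a4, a5, a6, a7] (5 : Fin 8) = a5 := rfl
@[simp] lemma cv8_6 {α : Type*} (a0 a1 a2 a3 a4 a5 a6 a7 : α) : ![a0, a1, a2, a3, a4, a5, a6, a7] (6 : Fin 8) = a6 := rfl
@[simp] lemma cv8_7 {α : Type*} (a0 a1 a2 a3 a4 a5 a6 a7 : α) : ![a0, a1, a2, a3, a4, a5, a6, a7] (7 : Fin 8) = a7 := rfl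
@[simp] lemma cv11_0 {α : Type*} (a0 a1 a2 a3 a4 a5 a6 a7 a8 a9 a10 : α) : ![a0, a1, a2, a3, a4, a5, a6, a7, a8, a9, a10] (0 : Fin 11) = a0 := rfl
@[simp] lemma cv11_1 {α : Type*} (a0 a1 a2 a3 a4 a5 a6 a7 a8 a9 a10 : α) : ![a0, a1, a2, a3, a4, a5, a6, a7, a8, a9, a10] (1 : Fin 11) = a1 := rfl
@[simp] lemma cv11_2 {α : Type*} (a0 a1 a2 a3 a4 a5 a6 a7 a8 a9 a10 : α) : ![a0, a1, a2, a3, a4, a5, a6, a7, a8, a9, a10] (2 : Fin 11) = a2 := rfl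
@[simp] lemma cv11_3 {α : Type*} (a0 a1 a2 a3 a4 a5 a6 a7 a8 a9 a10 : α) : ![a0, a1, a2, a3, a4, a5, a6, a7, a8, a9, a10] (3 : Fin 11) = a3 := rfl
@[simp] lemma cv11_4 {α : Type*} (a0 a1 a2 a3 a4 a5 a6 a7 a8 a9 a10 : α) : ![a0, a1, a2, a3, a4, a5, a6, a7, a8, a9, a10] (4 : Fin 11) = a4 := rfl
@[simp] lemma cv11_5 {α : Type*} (a0 a1 a2 a3 a4 a5 a6 a7 a8 a9 a10 : α) : ![a0, a1, a2, a3, a4, a5, a6, a7, a8, a9, a10] (5 : Fin 11) = a5 := rfl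
@[simp] lemma cv11_6 {α : Type*} (a0 a1 a2 a3 a4 a5 a6 a7 a8 a9 a10 : α) : ![a0, a1, a2, a3, a4, a5, a6, a7, a8, a9, a10] (6 : Fin 11) = a6 := rfl
@[simp] lemma cv11_7 {α : Type*} (a0 a1 a2 a3 a4 a5 a6 a7 a8 a9 a10 : α) : ![a0, a1, a2, a3, a4, a5, a6, a7, a8, a9, a10] (7 : Fin 11) = a7 := rfl
@[simp] lemma cv11_8 {α : Type*} (a0 a1 a2 a3 a4 a5 a6 a7 a8 a9 a10 : α) : ![a0, a1, a2, a3, a4, a5, a6, a7, a8, a9, a10] (8 : Fin 11) = a8 := rfl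
@[simp] lemma cv11_9 {α : Type*} (a0 a1 a2 a3 a4 a5 a6 a7 a8 a9 a10 : α) : ![a0, a1, a2, a3, a4, a5, a6, a7, a8, a9, a10] (9 : Fin 11) = a9 := rfl
@[simp] lemma cv11_10 {α : Type*} (a0 a1 a2 a3 a4 a5 a6 a7 a8 a9 a10 : α) : ![a0, a1, a2, a3, a4, a5, a6, a7, a8, a9, a10] (10 : Fin 11) = a10 := rfl

lemma gv0 (v : Fin 8 → ℝ) : (g 0).mulVec v = ![-v 7, -v 6, v 5, v 4, -v 3, -v 2, v 1, v 0] := by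
  funext j; fin_cases j <;>
   · simp [g, E8, Matrix.mulVec, dotProduct, Fin.sum_univ_eight, Matrix.single]
     try rfl
lemma gv1 (v : Fin 8 → ℝ) : (g 1).mulVec v = ![v 6, -v 7, -v 4, v 5, v 2, -v 3, -v 0, v 1] := by
  funext j; fin_cases j <;>
   · simp [g, E8, Matrix.mulVec, dotProduct, Fin.sum_univ_eight, Matrix.single]
     try rfl
lemma gv2 (v : Fin 8 → ℝ) : (g 2).mulVec v = ![v 5, -v 4, v 7, -v 6, v 1, -v 0, v 3, -v 2] := by
  funext j; fin_cases j <;>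
   · simp [g, E8, Matrix.mulVec, dotProduct, Fin.sum_univ_eight, Matrix.single]
     try rfl
lemma gv3 (v : Fin 8 → ℝ) : (g 3).mulVec v = ![v 4, v 5, v 6, v 7, -v 0, -v 1, -v 2, -v 3] := by
  funext j; fin_cases j <;>
   · simp [g, E8, Matrix.mulVec, dotProduct, Fin.sum_univ_eight, Matrix.single]
     try rfl
lemma gv4 (v : Fin 8 → ℝ) : (g 4).mulVec v = ![v 2, v 3, -v 0, -v 1, -v 6, -v 7, v 4, v 5] := by
  funext j; fin_cases j <;>
   · simp [g, E8, Matrix.mulVec, dotProduct, Fin.sum_univ_eight, Matrix.single]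
     try rfl
lemma gv5 (v : Fin 8 → ℝ) : (g 5).mulVec v = ![-v 3, v 2, -v 1, v 0, v 7, -v 6, v 5, -v 4] := by
  funext j; fin_cases j <;>
   · simp [g, E8, Matrix.mulVec, dotProduct, Fin.sum_univ_eight, Matrix.single]
     try rfl
lemma gv6 (v : Fin 8 → ℝ) : (g 6).mulVec v = ![-v 1, v 0, v 3, -v 2, v 5, -v 4, -v 7, v 6] := by
  funext j; fin_cases j <;>
   · simp [g, E8, Matrix.mulVec, dotProduct, Fin.sum_univ_eight, Matrix.single]
     try rfl

lemma sum_mulVec {ι : Type*} (s : Finset ι) (f : ι → Matrix (Fin 8) (Fin 8) ℝ) (v : Fin 8 → ℝ) :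
    (∑ i ∈ s, f i).mulVec v = ∑ i ∈ s, (f i).mulVec v := by
  induction s using Finset.cons_induction with
  | empty => simp
  | cons a s ha ih => simp [Matrix.add_mulVec, ih]

lemma ite_mulVec (c : Prop) [Decidable c] (M : Matrix (Fin 8) (Fin 8) ℝ) (v : Fin 8 → ℝ) :
    (if c then M else 0).mulVec v = if c then M.mulVec v else 0 := by
  split <;> simp

lemma sum_univ_eleven {M : Type*} [AddCommMonoid M] (f : Fin 11 → M) :
    ∑ i, f i = f 0 + f 1 + f 2 + f 3 + f 4 + f 5 + f 6 + f 7 + f 8 + f 9 + f 10 := by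
  rw [Fin.sum_univ_castSucc, Fin.sum_univ_castSucc, Fin.sum_univ_castSucc, Fin.sum_univ_eight]
  rfl

lemma bveq0 : bv 0 = ![1,0,0,0,0,0,0,0,0,0,0] := by
  funext l
  fin_cases l <;> simp (config := { decide := true }) [bv, Pi.single_apply]
lemma bveq1 : bv 1 = ![0,1,0,0,0,0,0,0,0,0,0] := by
  funext l
  fin_cases l <;> simp (config := { decide := true }) [bv, Pi.single_apply]
lemma bveq5 : bv 5 = ![0,0,0,0,0,1,0,0,0,0,0] := by
  funext l
  fin_cases l <;> simp (config := { decide := true }) [bv, Pi.single_apply]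
lemma bveq7 : bv 7 = ![0,0,0,0,0,0,0,1,0,0,0] := by
  funext l
  fin_cases l <;> simp (config := { decide := true }) [bv, Pi.single_apply]
lemma bveq8 : bv 8 = ![0,0,0,0,0,0,0,0,1,0,0] := by
  funext l
  fin_cases l <;> simp (config := { decide := true }) [bv, Pi.single_apply]
lemma bveq9 : bv 9 = ![0,0,0,0,0,0,0,0,0,1,0] := by
  funext l
  fin_cases l <;> simp (config := { decide := true }) [bv, Pi.single_apply]
lemma bveq10 : bv 10 = ![0,0,0,0,0,0,0,0,0,0,1] := by
  funext l
  fin_cases l <;> simp (config := { decide := true }) [bv, Pi.single_apply]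

lemma T2_eq (t eps : ℝ) : T2 t eps =
    ![-(t/2)*(5*eps/2), -(t/2)*(-eps/2), -(t/2)*(eps/2), -(t/2)*(-eps/2),
      -(t/2)*(1/3), -(t/2)*(-2/3), -(t/2)*(-1/3), -(t/2)*(1/3),
      -(t/2)*(-4*eps/3), -(t/2)*(-2*eps/3), -(t/2)*(2*eps/3)] := by
  funext k
  fin_cases k <;>
   · simp [T2, etaP, etaM, bveq0, bveq1, bveq5, bveq7, bveq8, bveq9, bveq10,
       Pi.smul_apply, Pi.add_apply, Pi.sub_apply, smul_eq_mul]
     try ring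
     try tauto
set_option maxHeartbeats 1000000 in
lemma case1_0 (t : ℝ) :
    (spinLift (Aex2 t 0)).mulVec ![0, 1, 0, 1, 0, 0, 0, 0] + (clContr (T2 t (1)) 0).mulVec ![0, 1, 0, 1, 0, 0, 0, 0] = 0 := by
  simp only [spinLift, clContr, contr, Aex2, tri, T2_eq,
    Matrix.smul_mulVec, sum_mulVec, ite_mulVec, Matrix.sub_mulVec,
    Matrix.add_mulVec, Matrix.zero_mulVec, Fin.sum_univ_seven, sum_univ_eleven,
    cv7_0, cv7_1, cv7_2, cv7_3, cv7_4, cv7_5, cv7_6,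
    cv11_0, cv11_1, cv11_2, cv11_3, cv11_4, cv11_5, cv11_6, cv11_7, cv11_8,
    cv11_9, cv11_10, Fin.isValue]
  simp (config := { decide := true }) only [E7, Matrix.smul_apply, Matrix.add_apply,
    Matrix.sub_apply, Matrix.zero_apply, Matrix.single, Matrix.of_apply,
    if_true, if_false, smul_eq_mul, ← Matrix.mulVec_mulVec]
  simp only [gv0, gv1, gv2, gv3, gv4, gv5, gv6, cv8_0, cv8_1, cv8_2, cv8_3, cv8_4,
    cv8_5, cv8_6, cv8_7]
  funext j
  fin_cases j <;>
   · simp [Pi.add_apply, Pi.smul_apply, Pi.zero_apply, smul_eq_mul]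
     try ring
     try tauto

set_option maxHeartbeats 1000000 in
lemma case1_1 (t : ℝ) :
    (spinLift (Aex2 t 1)).mulVec ![0, 1, 0, 1, 0, 0, 0, 0] + (clContr (T2 t (1)) 1).mulVec ![0, 1, 0, 1, 0, 0, 0, 0] = 0 := by
  simp only [spinLift, clContr, contr, Aex2, tri, T2_eq,
    Matrix.smul_mulVec, sum_mulVec, ite_mulVec, Matrix.sub_mulVec,
    Matrix.add_mulVec, Matrix.zero_mulVec, Fin.sum_univ_seven, sum_univ_eleven,
    cv7_0, cv7_1, cv7_2, cv7_3, cv7_4, cv7_5, cv7_6,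
    cv11_0, cv11_1, cv11_2, cv11_3, cv11_4, cv11_5, cv11_6, cv11_7, cv11_8,
    cv11_9, cv11_10, Fin.isValue]
  simp (config := { decide := true }) only [E7, Matrix.smul_apply, Matrix.add_apply,
    Matrix.sub_apply, Matrix.zero_apply, Matrix.single, Matrix.of_apply,
    if_true, if_false, smul_eq_mul, ← Matrix.mulVec_mulVec]
  simp only [gv0, gv1, gv2, gv3, gv4, gv5, gv6, cv8_0, cv8_1, cv8_2, cv8_3, cv8_4,
    cv8_5, cv8_6, cv8_7]
  funext j
  fin_cases j <;>
   · simp [Pi.add_apply, Pi.smul_apply, Pi.zero_apply, smul_eq_mul]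
     try ring
     try tauto

set_option maxHeartbeats 1000000 in
lemma case1_2 (t : ℝ) :
    (spinLift (Aex2 t 2)).mulVec ![0, 1, 0, 1, 0, 0, 0, 0] + (clContr (T2 t (1)) 2).mulVec ![0, 1, 0, 1, 0, 0, 0, 0] = 0 := by
  simp only [spinLift, clContr, contr, Aex2, tri, T2_eq,
    Matrix.smul_mulVec, sum_mulVec, ite_mulVec, Matrix.sub_mulVec,
    Matrix.add_mulVec, Matrix.zero_mulVec, Fin.sum_univ_seven, sum_univ_eleven,
    cv7_0, cv7_1, cv7_2, cv7_3, cv7_4, cv7_5, cv7_6,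
    cv11_0, cv11_1, cv11_2, cv11_3, cv11_4, cv11_5, cv11_6, cv11_7, cv11_8,
    cv11_9, cv11_10, Fin.isValue]
  simp (config := { decide := true }) only [E7, Matrix.smul_apply, Matrix.add_apply,
    Matrix.sub_apply, Matrix.zero_apply, Matrix.single, Matrix.of_apply,
    if_true, if_false, smul_eq_mul, ← Matrix.mulVec_mulVec]
  simp only [gv0, gv1, gv2, gv3, gv4, gv5, gv6, cv8_0, cv8_1, cv8_2, cv8_3, cv8_4,
    cv8_5, cv8_6, cv8_7]
  funext j
  fin_cases j <;>
   · simp [Pi.add_apply, Pi.smul_apply, Pi.zero_apply, smul_eq_mul]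
     try ring
     try tauto

set_option maxHeartbeats 1000000 in
lemma case1_3 (t : ℝ) :
    (spinLift (Aex2 t 3)).mulVec ![0, 1, 0, 1, 0, 0, 0, 0] + (clContr (T2 t (1)) 3).mulVec ![0, 1, 0, 1, 0, 0, 0, 0] = 0 := by
  simp only [spinLift, clContr, contr, Aex2, tri, T2_eq,
    Matrix.smul_mulVec, sum_mulVec, ite_mulVec, Matrix.sub_mulVec,
    Matrix.add_mulVec, Matrix.zero_mulVec, Fin.sum_univ_seven, sum_univ_eleven,
    cv7_0, cv7_1, cv7_2, cv7_3, cv7_4, cv7_5, cv7_6,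
    cv11_0, cv11_1, cv11_2, cv11_3, cv11_4, cv11_5, cv11_6, cv11_7, cv11_8,
    cv11_9, cv11_10, Fin.isValue]
  simp (config := { decide := true }) only [E7, Matrix.smul_apply, Matrix.add_apply,
    Matrix.sub_apply, Matrix.zero_apply, Matrix.single, Matrix.of_apply,
    if_true, if_false, smul_eq_mul, ← Matrix.mulVec_mulVec]
  simp only [gv0, gv1, gv2, gv3, gv4, gv5, gv6, cv8_0, cv8_1, cv8_2, cv8_3, cv8_4,
    cv8_5, cv8_6, cv8_7]
  funext j
  fin_cases j <;>
   · simp [Pi.add_apply, Pi.smul_apply, Pi.zero_apply, smul_eq_mul]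
     try ring
     try tauto

set_option maxHeartbeats 1000000 in
lemma case1_4 (t : ℝ) :
    (spinLift (Aex2 t 4)).mulVec ![0, 1, 0, 1, 0, 0, 0, 0] + (clContr (T2 t (1)) 4).mulVec ![0, 1, 0, 1, 0, 0, 0, 0] = 0 := by
  simp only [spinLift, clContr, contr, Aex2, tri, T2_eq,
    Matrix.smul_mulVec, sum_mulVec, ite_mulVec, Matrix.sub_mulVec,
    Matrix.add_mulVec, Matrix.zero_mulVec, Fin.sum_univ_seven, sum_univ_eleven,
    cv7_0, cv7_1, cv7_2, cv7_3, cv7_4, cv7_5, cv7_6,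
    cv11_0, cv11_1, cv11_2, cv11_3, cv11_4, cv11_5, cv11_6, cv11_7, cv11_8,
    cv11_9, cv11_10, Fin.isValue]
  simp (config := { decide := true }) only [E7, Matrix.smul_apply, Matrix.add_apply,
    Matrix.sub_apply, Matrix.zero_apply, Matrix.single, Matrix.of_apply,
    if_true, if_false, smul_eq_mul, ← Matrix.mulVec_mulVec]
  simp only [gv0, gv1, gv2, gv3, gv4, gv5, gv6, cv8_0, cv8_1, cv8_2, cv8_3, cv8_4,
    cv8_5, cv8_6, cv8_7]
  funext j
  fin_cases j <;>
   · simp [Pi.add_apply, Pi.smul_apply, Pi.zero_apply, smul_eq_mul]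
     try ring
     try tauto

set_option maxHeartbeats 1000000 in
lemma case1_5 (t : ℝ) :
    (spinLift (Aex2 t 5)).mulVec ![0, 1, 0, 1, 0, 0, 0, 0] + (clContr (T2 t (1)) 5).mulVec ![0, 1, 0, 1, 0, 0, 0, 0] = 0 := by
  simp only [spinLift, clContr, contr, Aex2, tri, T2_eq,
    Matrix.smul_mulVec, sum_mulVec, ite_mulVec, Matrix.sub_mulVec,
    Matrix.add_mulVec, Matrix.zero_mulVec, Fin.sum_univ_seven, sum_univ_eleven,
    cv7_0, cv7_1, cv7_2, cv7_3, cv7_4, cv7_5, cv7_6,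
    cv11_0, cv11_1, cv11_2, cv11_3, cv11_4, cv11_5, cv11_6, cv11_7, cv11_8,
    cv11_9, cv11_10, Fin.isValue]
  simp (config := { decide := true }) only [E7, Matrix.smul_apply, Matrix.add_apply,
    Matrix.sub_apply, Matrix.zero_apply, Matrix.single, Matrix.of_apply,
    if_true, if_false, smul_eq_mul, ← Matrix.mulVec_mulVec]
  simp only [gv0, gv1, gv2, gv3, gv4, gv5, gv6, cv8_0, cv8_1, cv8_2, cv8_3, cv8_4,
    cv8_5, cv8_6, cv8_7]
  funext j
  fin_cases j <;>
   · simp [Pi.add_apply, Pi.smul_apply, Pi.zero_apply, smul_eq_mul]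
     try ring
     try tauto

set_option maxHeartbeats 1000000 in
lemma case1_6 (t : ℝ) :
    (spinLift (Aex2 t 6)).mulVec ![0, 1, 0, 1, 0, 0, 0, 0] + (clContr (T2 t (1)) 6).mulVec ![0, 1, 0, 1, 0, 0, 0, 0] = 0 := by
  simp only [spinLift, clContr, contr, Aex2, tri, T2_eq,
    Matrix.smul_mulVec, sum_mulVec, ite_mulVec, Matrix.sub_mulVec,
    Matrix.add_mulVec, Matrix.zero_mulVec, Fin.sum_univ_seven, sum_univ_eleven,
    cv7_0, cv7_1, cv7_2, cv7_3, cv7_4, cv7_5, cv7_6,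
    cv11_0, cv11_1, cv11_2, cv11_3, cv11_4, cv11_5, cv11_6, cv11_7, cv11_8,
    cv11_9, cv11_10, Fin.isValue]
  simp (config := { decide := true }) only [E7, Matrix.smul_apply, Matrix.add_apply,
    Matrix.sub_apply, Matrix.zero_apply, Matrix.single, Matrix.of_apply,
    if_true, if_false, smul_eq_mul, ← Matrix.mulVec_mulVec]
  simp only [gv0, gv1, gv2, gv3, gv4, gv5, gv6, cv8_0, cv8_1, cv8_2, cv8_3, cv8_4,
    cv8_5, cv8_6, cv8_7]
  funext j
  fin_cases j <;>
   · simp [Pi.add_apply, Pi.smul_apply, Pi.zero_apply, smul_eq_mul]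
     try ring
     try tauto

set_option maxHeartbeats 1000000 in
lemma case2_0 (t : ℝ) :
    (spinLift (Aex2 t 0)).mulVec ![1, 0, -1, 0, 0, 0, 0, 0] + (clContr (T2 t (-1)) 0).mulVec ![1, 0, -1, 0, 0, 0, 0, 0] = 0 := by
  simp only [spinLift, clContr, contr, Aex2, tri, T2_eq,
    Matrix.smul_mulVec, sum_mulVec, ite_mulVec, Matrix.sub_mulVec,
    Matrix.add_mulVec, Matrix.zero_mulVec, Fin.sum_univ_seven, sum_univ_eleven,
    cv7_0, cv7_1, cv7_2, cv7_3, cv7_4, cv7_5, cv7_6,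
    cv11_0, cv11_1, cv11_2, cv11_3, cv11_4, cv11_5, cv11_6, cv11_7, cv11_8,
    cv11_9, cv11_10, Fin.isValue]
  simp (config := { decide := true }) only [E7, Matrix.smul_apply, Matrix.add_apply,
    Matrix.sub_apply, Matrix.zero_apply, Matrix.single, Matrix.of_apply,
    if_true, if_false, smul_eq_mul, ← Matrix.mulVec_mulVec]
  simp only [gv0, gv1, gv2, gv3, gv4, gv5, gv6, cv8_0, cv8_1, cv8_2, cv8_3, cv8_4,
    cv8_5, cv8_6, cv8_7]
  funext j
  fin_cases j <;>
   · simp [Pi.add_apply, Pi.smul_apply, Pi.zero_apply, smul_eq_mul]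
     try ring
     try tauto

set_option maxHeartbeats 1000000 in
lemma case2_1 (t : ℝ) :
    (spinLift (Aex2 t 1)).mulVec ![1, 0, -1, 0, 0, 0, 0, 0] + (clContr (T2 t (-1)) 1).mulVec ![1, 0, -1, 0, 0, 0, 0, 0] = 0 := by
  simp only [spinLift, clContr, contr, Aex2, tri, T2_eq,
    Matrix.smul_mulVec, sum_mulVec, ite_mulVec, Matrix.sub_mulVec,
    Matrix.add_mulVec, Matrix.zero_mulVec, Fin.sum_univ_seven, sum_univ_eleven,
    cv7_0, cv7_1, cv7_2, cv7_3, cv7_4, cv7_5, cv7_6,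
    cv11_0, cv11_1, cv11_2, cv11_3, cv11_4, cv11_5, cv11_6, cv11_7, cv11_8,
    cv11_9, cv11_10, Fin.isValue]
  simp (config := { decide := true }) only [E7, Matrix.smul_apply, Matrix.add_apply,
    Matrix.sub_apply, Matrix.zero_apply, Matrix.single, Matrix.of_apply,
    if_true, if_false, smul_eq_mul, ← Matrix.mulVec_mulVec]
  simp only [gv0, gv1, gv2, gv3, gv4, gv5, gv6, cv8_0, cv8_1, cv8_2, cv8_3, cv8_4,
    cv8_5, cv8_6, cv8_7]
  funext j
  fin_cases j <;>
   · simp [Pi.add_apply, Pi.smul_apply, Pi.zero_apply, smul_eq_mul]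
     try ring
     try tauto

set_option maxHeartbeats 1000000 in
lemma case2_2 (t : ℝ) :
    (spinLift (Aex2 t 2)).mulVec ![1, 0, -1, 0, 0, 0, 0, 0] + (clContr (T2 t (-1)) 2).mulVec ![1, 0, -1, 0, 0, 0, 0, 0] = 0 := by
  simp only [spinLift, clContr, contr, Aex2, tri, T2_eq,
    Matrix.smul_mulVec, sum_mulVec, ite_mulVec, Matrix.sub_mulVec,
    Matrix.add_mulVec, Matrix.zero_mulVec, Fin.sum_univ_seven, sum_univ_eleven,
    cv7_0, cv7_1, cv7_2, cv7_3, cv7_4, cv7_5, cv7_6,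
    cv11_0, cv11_1, cv11_2, cv11_3, cv11_4, cv11_5, cv11_6, cv11_7, cv11_8,
    cv11_9, cv11_10, Fin.isValue]
  simp (config := { decide := true }) only [E7, Matrix.smul_apply, Matrix.add_apply,
    Matrix.sub_apply, Matrix.zero_apply, Matrix.single, Matrix.of_apply,
    if_true, if_false, smul_eq_mul, ← Matrix.mulVec_mulVec]
  simp only [gv0, gv1, gv2, gv3, gv4, gv5, gv6, cv8_0, cv8_1, cv8_2, cv8_3, cv8_4,
    cv8_5, cv8_6, cv8_7]
  funext j
  fin_cases j <;>
   · simp [Pi.add_apply, Pi.smul_apply, Pi.zero_apply, smul_eq_mul]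
     try ring
     try tauto

set_option maxHeartbeats 1000000 in
lemma case2_3 (t : ℝ) :
    (spinLift (Aex2 t 3)).mulVec ![1, 0, -1, 0, 0, 0, 0, 0] + (clContr (T2 t (-1)) 3).mulVec ![1, 0, -1, 0, 0, 0, 0, 0] = 0 := by
  simp only [spinLift, clContr, contr, Aex2, tri, T2_eq,
    Matrix.smul_mulVec, sum_mulVec, ite_mulVec, Matrix.sub_mulVec,
    Matrix.add_mulVec, Matrix.zero_mulVec, Fin.sum_univ_seven, sum_univ_eleven,
    cv7_0, cv7_1, cv7_2, cv7_3, cv7_4, cv7_5, cv7_6,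
    cv11_0, cv11_1, cv11_2, cv11_3, cv11_4, cv11_5, cv11_6, cv11_7, cv11_8,
    cv11_9, cv11_10, Fin.isValue]
  simp (config := { decide := true }) only [E7, Matrix.smul_apply, Matrix.add_apply,
    Matrix.sub_apply, Matrix.zero_apply, Matrix.single, Matrix.of_apply,
    if_true, if_false, smul_eq_mul, ← Matrix.mulVec_mulVec]
  simp only [gv0, gv1, gv2, gv3, gv4, gv5, gv6, cv8_0, cv8_1, cv8_2, cv8_3, cv8_4,
    cv8_5, cv8_6, cv8_7]
  funext j
  fin_cases j <;>
   · simp [Pi.add_apply, Pi.smul_apply, Pi.zero_apply, smul_eq_mul]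
     try ring
     try tauto

set_option maxHeartbeats 1000000 in
lemma case2_4 (t : ℝ) :
    (spinLift (Aex2 t 4)).mulVec ![1, 0, -1, 0, 0, 0, 0, 0] + (clContr (T2 t (-1)) 4).mulVec ![1, 0, -1, 0, 0, 0, 0, 0] = 0 := by
  simp only [spinLift, clContr, contr, Aex2, tri, T2_eq,
    Matrix.smul_mulVec, sum_mulVec, ite_mulVec, Matrix.sub_mulVec,
    Matrix.add_mulVec, Matrix.zero_mulVec, Fin.sum_univ_seven, sum_univ_eleven,
    cv7_0, cv7_1, cv7_2, cv7_3, cv7_4, cv7_5, cv7_6,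
    cv11_0, cv11_1, cv11_2, cv11_3, cv11_4, cv11_5, cv11_6, cv11_7, cv11_8,
    cv11_9, cv11_10, Fin.isValue]
  simp (config := { decide := true }) only [E7, Matrix.smul_apply, Matrix.add_apply,
    Matrix.sub_apply, Matrix.zero_apply, Matrix.single, Matrix.of_apply,
    if_true, if_false, smul_eq_mul, ← Matrix.mulVec_mulVec]
  simp only [gv0, gv1, gv2, gv3, gv4, gv5, gv6, cv8_0, cv8_1, cv8_2, cv8_3, cv8_4,
    cv8_5, cv8_6, cv8_7]
  funext j
  fin_cases j <;>
   · simp [Pi.add_apply, Pi.smul_apply, Pi.zero_apply, smul_eq_mul]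
     try ring
     try tauto

set_option maxHeartbeats 1000000 in
lemma case2_5 (t : ℝ) :
    (spinLift (Aex2 t 5)).mulVec ![1, 0, -1, 0, 0, 0, 0, 0] + (clContr (T2 t (-1)) 5).mulVec ![1, 0, -1, 0, 0, 0, 0, 0] = 0 := by
  simp only [spinLift, clContr, contr, Aex2, tri, T2_eq,
    Matrix.smul_mulVec, sum_mulVec, ite_mulVec, Matrix.sub_mulVec,
    Matrix.add_mulVec, Matrix.zero_mulVec, Fin.sum_univ_seven, sum_univ_eleven,
    cv7_0, cv7_1, cv7_2, cv7_3, cv7_4, cv7_5, cv7_6,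
    cv11_0, cv11_1, cv11_2, cv11_3, cv11_4, cv11_5, cv11_6, cv11_7, cv11_8,
    cv11_9, cv11_10, Fin.isValue]
  simp (config := { decide := true }) only [E7, Matrix.smul_apply, Matrix.add_apply,
    Matrix.sub_apply, Matrix.zero_apply, Matrix.single, Matrix.of_apply,
    if_true, if_false, smul_eq_mul, ← Matrix.mulVec_mulVec]
  simp only [gv0, gv1, gv2, gv3, gv4, gv5, gv6, cv8_0, cv8_1, cv8_2, cv8_3, cv8_4,
    cv8_5, cv8_6, cv8_7]
  funext j
  fin_cases j <;>
   · simp [Pi.add_apply, Pi.smul_apply, Pi.zero_apply, smul_eq_mul]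
     try ring
     try tauto

set_option maxHeartbeats 1000000 in
lemma case2_6 (t : ℝ) :
    (spinLift (Aex2 t 6)).mulVec ![1, 0, -1, 0, 0, 0, 0, 0] + (clContr (T2 t (-1)) 6).mulVec ![1, 0, -1, 0, 0, 0, 0, 0] = 0 := by
  simp only [spinLift, clContr, contr, Aex2, tri, T2_eq,
    Matrix.smul_mulVec, sum_mulVec, ite_mulVec, Matrix.sub_mulVec,
    Matrix.add_mulVec, Matrix.zero_mulVec, Fin.sum_univ_seven, sum_univ_eleven,
    cv7_0, cv7_1, cv7_2, cv7_3, cv7_4, cv7_5, cv7_6,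
    cv11_0, cv11_1, cv11_2, cv11_3, cv11_4, cv11_5, cv11_6, cv11_7, cv11_8,
    cv11_9, cv11_10, Fin.isValue]
  simp (config := { decide := true }) only [E7, Matrix.smul_apply, Matrix.add_apply,
    Matrix.sub_apply, Matrix.zero_apply, Matrix.single, Matrix.of_apply,
    if_true, if_false, smul_eq_mul, ← Matrix.mulVec_mulVec]
  simp only [gv0, gv1, gv2, gv3, gv4, gv5, gv6, cv8_0, cv8_1, cv8_2, cv8_3, cv8_4,
    cv8_5, cv8_6, cv8_7]
  funext j
  fin_cases j <;>
   · simp [Pi.add_apply, Pi.smul_apply, Pi.zero_apply, smul_eq_mul]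
     try ring
     try tauto

set_option maxHeartbeats 1000000 in
/-- the spinors `ψ₂^ε` are `∇ᵀ`-parallel for `T₂^ε`. -/
theorem stmt5 (t : ℝ) (ht : 0 < t) (eps : ℝ) (heps : eps = 1 ∨ eps = -1) :
    IsParallel (Aex2 t) (T2 t eps)
      (if eps = 1 then ![0, 1, 0, 1, 0, 0, 0, 0] else ![1, 0, -1, 0, 0, 0, 0, 0]) := by
  rcases heps with h | h <;> subst h
  · rw [if_pos rfl]
    intro i
    fin_cases i
    · exact case1_0 t
    · exact case1_1 t
    · exact case1_2 t
    · exact case1_3 t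
    · exact case1_4 t
    · exact case1_5 t
    · exact case1_6 t
  · rw [if_neg (by norm_num)]
    intro i
    fin_cases i
    · exact case2_0 t
    · exact case2_1 t
    · exact case2_2 t
    · exact case2_3 t
    · exact case2_4 t
    · exact case2_5 t
    · exact case2_6 t
end
end

section
/- (Four invariant parallel spinors for example (1).) Fix t > 0 and let the connection matrices of example (1) be A₁ = −t(E₁₇+E₃₅), A₃ = −t(E₁₅−E₃₇), A₅ = −t(E₁₃+E₅₇), and A₂ = A₄ = A₆ = A₇ = 0. Then the space {ψ ∈ ℝ⁸ : σ(A_i)·ψ = 0 for all i = 1,…,7} is exactly the four-dimensional linear span of (1,1,0,0,0,0,0,0), (0,0,−1,1,0,0,0,0), (0,0,0,0,1,1,0,0), (0,0,0,0,0,0,−1,1). -/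
open Matrix

noncomputable section

/-- Connection matrices of example (1). -/
def Aex1 (t : ℝ) : Fin 7 → Matrix (Fin 7) (Fin 7) ℝ :=
  ![(-t) • (E7 0 6 + E7 2 4), 0,
    (-t) • (E7 0 4 - E7 2 6), 0,
    (-t) • (E7 0 2 + E7 4 6), 0, 0]

set_option maxHeartbeats 1000000

@[simp] lemma cons_val_five' {α : Type*} {m : ℕ} (x : α) (u : Fin (m+5) → α) :
    vecCons x u 5 = vecHead (vecTail (vecTail (vecTail (vecTail u)))) := rfl
@[simp] lemma cons_val_six' {α : Type*} {m : ℕ} (x : α) (u : Fin (m+6) → α) :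
    vecCons x u 6 = vecHead (vecTail (vecTail (vecTail (vecTail (vecTail u))))) := rfl
@[simp] lemma cons_val_seven' {α : Type*} {m : ℕ} (x : α) (u : Fin (m+7) → α) :
    vecCons x u 7 = vecHead (vecTail (vecTail (vecTail (vecTail (vecTail (vecTail u)))))) := rfl

lemma spinLift_zero : spinLift (0 : Matrix (Fin 7) (Fin 7) ℝ) = 0 := by
  simp [spinLift]

lemma gmv0 (ψ : Fin 8 → ℝ) : (g 0).mulVec ψ =
    ![-(ψ 7), -(ψ 6), ψ 5, ψ 4, -(ψ 3), -(ψ 2), ψ 1, ψ 0] := by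
  funext k
  fin_cases k <;>
    simp [g, E8, Matrix.mulVec, dotProduct, Fin.sum_univ_eight,
      Matrix.single, Matrix.of_apply]

lemma gmv2 (ψ : Fin 8 → ℝ) : (g 2).mulVec ψ =
    ![ψ 5, -(ψ 4), ψ 7, -(ψ 6), ψ 1, -(ψ 0), ψ 3, -(ψ 2)] := by
  funext k
  fin_cases k <;>
    simp [g, E8, Matrix.mulVec, dotProduct, Fin.sum_univ_eight,
      Matrix.single, Matrix.of_apply]

lemma gmv4 (ψ : Fin 8 → ℝ) : (g 4).mulVec ψ =
    ![ψ 2, ψ 3, -(ψ 0), -(ψ 1), -(ψ 6), -(ψ 7), ψ 4, ψ 5] := by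
  funext k
  fin_cases k <;>
    simp [g, E8, Matrix.mulVec, dotProduct, Fin.sum_univ_eight,
      Matrix.single, Matrix.of_apply]

lemma gmv6 (ψ : Fin 8 → ℝ) : (g 6).mulVec ψ =
    ![-(ψ 1), ψ 0, ψ 3, -(ψ 2), ψ 5, -(ψ 4), -(ψ 7), ψ 6] := by
  funext k
  fin_cases k <;>
    simp [g, E8, Matrix.mulVec, dotProduct, Fin.sum_univ_eight,
      Matrix.single, Matrix.of_apply]

lemma red0 (t : ℝ) : spinLift (Aex1 t 0) =
    (-(t/2)) • (g 0 * g 6) + (-(t/2)) • (g 2 * g 4) := by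
  simp only [spinLift, Fin.sum_univ_seven]
  norm_num (config := { decide := true }) [Aex1, E7, Matrix.single, Matrix.of_apply]
  module

lemma red2 (t : ℝ) : spinLift (Aex1 t 2) =
    (-(t/2)) • (g 0 * g 4) + (t/2) • (g 2 * g 6) := by
  rw [show Aex1 t 2 = (-t) • (E7 0 4 - E7 2 6) from rfl]
  simp only [spinLift, Fin.sum_univ_seven]
  norm_num (config := { decide := true }) [Aex1, E7, Matrix.single, Matrix.of_apply, Matrix.cons_val]
  module

lemma red4 (t : ℝ) : spinLift (Aex1 t 4) =
    (-(t/2)) • (g 0 * g 2) + (-(t/2)) • (g 4 * g 6) := by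
  rw [show Aex1 t 4 = (-t) • (E7 0 2 + E7 4 6) from rfl]
  simp only [spinLift, Fin.sum_univ_seven]
  norm_num (config := { decide := true }) [Aex1, E7, Matrix.single, Matrix.of_apply, Matrix.cons_val]
  module

lemma mv0 (t : ℝ) (ψ : Fin 8 → ℝ) : (spinLift (Aex1 t 0)).mulVec ψ =
    ![t/2*(ψ 6 + ψ 7), -(t/2*(ψ 6 + ψ 7)), t/2*(ψ 4 - ψ 5), t/2*(ψ 4 - ψ 5),
      -(t/2*(ψ 2 + ψ 3)), t/2*(ψ 2 + ψ 3), t/2*(ψ 1 - ψ 0), t/2*(ψ 1 - ψ 0)] := by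
  rw [red0]
  simp only [Matrix.add_mulVec, Matrix.smul_mulVec, ← Matrix.mulVec_mulVec,
    gmv6, gmv0, gmv4, gmv2]
  funext k
  fin_cases k <;> · simp; ring

lemma mv2 (t : ℝ) (ψ : Fin 8 → ℝ) : (spinLift (Aex1 t 2)).mulVec ψ =
    ![t/2*(ψ 5 - ψ 4), t/2*(ψ 4 - ψ 5), t/2*(ψ 6 + ψ 7), t/2*(ψ 6 + ψ 7),
      t/2*(ψ 0 - ψ 1), t/2*(ψ 1 - ψ 0), -(t/2*(ψ 2 + ψ 3)), -(t/2*(ψ 2 + ψ 3))] := by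
  rw [red2]
  simp only [Matrix.add_mulVec, Matrix.smul_mulVec, ← Matrix.mulVec_mulVec,
    gmv6, gmv0, gmv4, gmv2]
  funext k
  fin_cases k <;> · simp; ring

lemma mv4 (t : ℝ) (ψ : Fin 8 → ℝ) : (spinLift (Aex1 t 4)).mulVec ψ =
    ![-(t/2*(ψ 2 + ψ 3)), t/2*(ψ 2 + ψ 3), t/2*(ψ 0 - ψ 1), t/2*(ψ 0 - ψ 1),
      -(t/2*(ψ 6 + ψ 7)), t/2*(ψ 6 + ψ 7), t/2*(ψ 4 - ψ 5), t/2*(ψ 4 - ψ 5)] := by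
  rw [red4]
  simp only [Matrix.add_mulVec, Matrix.smul_mulVec, ← Matrix.mulVec_mulVec,
    gmv6, gmv0, gmv4, gmv2]
  funext k
  fin_cases k <;> · simp; ring


/-- four invariant parallel spinors for example (1). -/
theorem stmt17 (t : ℝ) (ht : 0 < t) :
    ∀ ψ : Fin 8 → ℝ, (∀ i : Fin 7, (spinLift (Aex1 t i)).mulVec ψ = 0) ↔
      ψ ∈ Submodule.span ℝ
        {(![1, 1, 0, 0, 0, 0, 0, 0] : Fin 8 → ℝ),
         ![0, 0, -1, 1, 0, 0, 0, 0],
         ![0, 0, 0, 0, 1, 1, 0, 0],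
         ![0, 0, 0, 0, 0, 0, -1, 1]} := by
  intro ψ
  have ht2 : t / 2 ≠ 0 := by positivity
  constructor
  · intro h
    have h0 := h 0
    rw [mv0] at h0
    have e0 : ψ 6 + ψ 7 = 0 := by
      have := congrFun h0 0
      simp at this
      exact this.resolve_left (ne_of_gt ht)
    have e2 : ψ 4 - ψ 5 = 0 := by
      have := congrFun h0 2
      simp at this
      exact this.resolve_left (ne_of_gt ht)
    have e4 : ψ 2 + ψ 3 = 0 := by
      have := congrFun h0 5
      simp at this
      exact this.resolve_left (ne_of_gt ht)
    have e6 : ψ 1 - ψ 0 = 0 := by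
      have := congrFun h0 6
      simp at this
      exact this.resolve_left (ne_of_gt ht)
    have hrep : ψ = ψ 0 • (![1, 1, 0, 0, 0, 0, 0, 0] : Fin 8 → ℝ)
        + (-(ψ 2)) • (![0, 0, -1, 1, 0, 0, 0, 0] : Fin 8 → ℝ)
        + ψ 4 • (![0, 0, 0, 0, 1, 1, 0, 0] : Fin 8 → ℝ)
        + (-(ψ 6)) • (![0, 0, 0, 0, 0, 0, -1, 1] : Fin 8 → ℝ) := by
      funext j
      fin_cases j <;> simp <;> linarith
    rw [hrep]
    refine add_mem (add_mem (add_mem ?_ ?_) ?_) ?_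
    · exact Submodule.smul_mem _ _ (Submodule.subset_span (Set.mem_insert _ _))
    · exact Submodule.smul_mem _ _ (Submodule.subset_span
        (Set.mem_insert_of_mem _ (Set.mem_insert _ _)))
    · exact Submodule.smul_mem _ _ (Submodule.subset_span
        (Set.mem_insert_of_mem _ (Set.mem_insert_of_mem _ (Set.mem_insert _ _))))
    · exact Submodule.smul_mem _ _ (Submodule.subset_span
        (Set.mem_insert_of_mem _ (Set.mem_insert_of_mem _ (Set.mem_insert_of_mem _ rfl))))
  · intro hmem i
    have hA1 : Aex1 t 1 = 0 := rfl
    have hA3 : Aex1 t 3 = 0 := rfl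
    have hA5 : Aex1 t 5 = 0 := rfl
    have hA6 : Aex1 t 6 = 0 := rfl
    have hker : Submodule.span ℝ
        {(![1, 1, 0, 0, 0, 0, 0, 0] : Fin 8 → ℝ),
         ![0, 0, -1, 1, 0, 0, 0, 0],
         ![0, 0, 0, 0, 1, 1, 0, 0],
         ![0, 0, 0, 0, 0, 0, -1, 1]} ≤
        LinearMap.ker (spinLift (Aex1 t i)).mulVecLin := by
      rw [Submodule.span_le]
      intro x hx
      simp only [Set.mem_insert_iff, Set.mem_singleton_iff] at hx
      simp only [SetLike.mem_coe, LinearMap.mem_ker, Matrix.mulVecLin_apply]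
      rcases hx with rfl | rfl | rfl | rfl <;>
        fin_cases i <;>
          simp [mv0, mv2, mv4, hA1, hA3, hA5, hA6, spinLift_zero]
    have := hker hmem
    rwa [LinearMap.mem_ker, Matrix.mulVecLin_apply] at this
end
end
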